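/- Let H ∈ ℂ^{m×n}, v ∈ ℂ^m, Q = H†H, and Q̄ = Q − (1/2)Diag(diag(Q)). Let x* ∈ ℂⁿ with entries exp(iθ*_j), θ*_j ∈ A = {2(k−1)π/M : k = 1..M}, and let x ∈ ℂⁿ be any other vector with entries in exp(iA), x ≠ x*. If √2 · λ_min(Q̄) · sin(π/M) > ‖H†v‖_∞, then −2⟨x* − x, Q̄(x* − x)⟩ + 2⟨−H†v, x* − x⟩ < 0, where ⟨u, w⟩ = Re(u†w). -/

import Mathlib

open Matrix

/-- On the band `[c, π - c]` (with `0 < c ≤ π/2`), `sin` is at least `sin c`. -/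
lemma aux_sin_band {c u : ℝ} (hc0 : 0 < c) (hc : c ≤ Real.pi / 2)
    (h1 : c ≤ u) (h2 : u ≤ Real.pi - c) : Real.sin c ≤ Real.sin u := by
  rcases le_total u (Real.pi / 2) with h | h
  · exact Real.sin_le_sin_of_le_of_le_pi_div_two (by linarith) h h1
  · rw [← Real.sin_pi_sub u]
    exact Real.sin_le_sin_of_le_of_le_pi_div_two (by linarith) (by linarith) (by linarith)

/-- The modulus of a difference of two unit phasors. -/
lemma aux_abs_exp_sub (a b : ℝ) :
    ‖Complex.exp (a * Complex.I) - Complex.exp (b * Complex.I)‖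
      = 2 * |Real.sin ((a - b) / 2)| := by
  have hsq : ‖Complex.exp (a * Complex.I) - Complex.exp (b * Complex.I)‖ ^ 2
      = (2 * |Real.sin ((a - b) / 2)|) ^ 2 := by
    rw [Complex.sq_norm, Complex.normSq_apply]
    simp only [Complex.exp_mul_I, Complex.sub_re, Complex.sub_im, Complex.add_re, Complex.add_im,
      Complex.mul_re, Complex.mul_im, Complex.I_re, Complex.I_im]
    rw [← Complex.ofReal_cos, ← Complex.ofReal_sin, ← Complex.ofReal_cos, ← Complex.ofReal_sin]
    simp only [Complex.ofReal_re, Complex.ofReal_im]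
    have hc := Real.cos_sub_cos a b
    have hs := Real.sin_sub_sin a b
    have hpy := Real.sin_sq_add_cos_sq ((a + b) / 2)
    have e1 : (Real.cos a - Real.cos b) ^ 2
        = 4 * Real.sin ((a + b) / 2) ^ 2 * Real.sin ((a - b) / 2) ^ 2 := by rw [hc]; ring
    have e2 : (Real.sin a - Real.sin b) ^ 2
        = 4 * Real.sin ((a - b) / 2) ^ 2 * Real.cos ((a + b) / 2) ^ 2 := by rw [hs]; ring
    rw [mul_pow, sq_abs]
    linear_combination e1 + e2 + 4 * Real.sin ((a - b) / 2) ^ 2 * hpy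
  have h1 : 0 ≤ ‖Complex.exp (a * Complex.I) - Complex.exp (b * Complex.I)‖ :=
    norm_nonneg _
  have h2 : 0 ≤ 2 * |Real.sin ((a - b) / 2)| := by positivity
  nlinarith [hsq, h1, h2]

/-- Entry lower bound for a nonzero difference of M-PSK phasors. -/
lemma aux_entry {M : ℕ} (hM : 2 ≤ M) {a b : ℝ} {ka kb : ℕ} (hka : ka < M) (hkb : kb < M)
    (ha : a = 2 * ka * Real.pi / M) (hb : b = 2 * kb * Real.pi / M)
    (hne : Complex.exp (a * Complex.I) ≠ Complex.exp (b * Complex.I)) :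
    2 * Real.sin (Real.pi / M) ≤
      ‖Complex.exp (a * Complex.I) - Complex.exp (b * Complex.I)‖ := by
  have hπ := Real.pi_pos
  have hM0 : (0 : ℝ) < M := by exact_mod_cast Nat.lt_of_lt_of_le Nat.zero_lt_two hM
  have hM1 : (2 : ℝ) ≤ M := by exact_mod_cast hM
  rw [aux_abs_exp_sub]
  have hkk : ka ≠ kb := by
    rintro rfl
    exact hne (by rw [ha, hb])
  -- (a - b)/2 = (ka - kb) * π / M
  have hd : (a - b) / 2 = ((ka : ℝ) - kb) * Real.pi / M := by
    rw [ha, hb]; ring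
  set d : ℝ := |(ka : ℝ) - kb| with hdd
  have habs : |Real.sin ((a - b) / 2)| = |Real.sin (d * Real.pi / M)| := by
    rw [hd, hdd]
    rcases abs_choice ((ka : ℝ) - kb) with h | h
    · rw [h]
    · rw [h]
      rw [show -((ka:ℝ) - kb) * Real.pi / M = -(((ka:ℝ) - kb) * Real.pi / M) by ring,
        Real.sin_neg, abs_neg]
  have hd1 : 1 ≤ d := by
    have : ((ka : ℤ) - kb) ≠ 0 := sub_ne_zero.mpr (by exact_mod_cast hkk)
    have h1 : (1 : ℤ) ≤ |(ka : ℤ) - kb| := Int.one_le_abs this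
    have : (1 : ℝ) ≤ |((ka : ℤ) - kb : ℤ)| := by exact_mod_cast h1
    simpa [hdd] using this
  have hdM : d ≤ (M : ℝ) - 1 := by
    have h1 : (ka : ℝ) ≤ (M : ℝ) - 1 := by
      have : (ka : ℝ) ≤ (M : ℝ) - 1 ↔ (ka : ℝ) + 1 ≤ M := by constructor <;> intro <;> linarith
      rw [this]; exact_mod_cast hka
    have h2 : (kb : ℝ) ≤ (M : ℝ) - 1 := by
      have : (kb : ℝ) ≤ (M : ℝ) - 1 ↔ (kb : ℝ) + 1 ≤ M := by constructor <;> intro <;> linarith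
      rw [this]; exact_mod_cast hkb
    have h3 : (0 : ℝ) ≤ ka := Nat.cast_nonneg ka
    have h4 : (0 : ℝ) ≤ kb := Nat.cast_nonneg kb
    rw [hdd, abs_sub_le_iff]
    constructor <;> linarith
  have hband : Real.sin (Real.pi / M) ≤ Real.sin (d * Real.pi / M) := by
    apply aux_sin_band (by positivity)
    · rw [div_le_div_iff₀ hM0 (by norm_num : (0:ℝ) < 2)]; nlinarith
    · have h5 : Real.pi / M ≤ d * (Real.pi / M) :=
        le_mul_of_one_le_left (by positivity) hd1
      calc Real.pi / M ≤ d * (Real.pi / M) := h5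
        _ = d * Real.pi / M := by ring
    · have h5 : d * Real.pi / M ≤ ((M : ℝ) - 1) * Real.pi / M := by
        rw [div_le_div_iff₀ hM0 hM0]
        nlinarith [mul_le_mul_of_nonneg_right
          (mul_le_mul_of_nonneg_right hdM hπ.le) hM0.le]
      calc d * Real.pi / M ≤ ((M : ℝ) - 1) * Real.pi / M := h5
        _ = Real.pi - Real.pi / M := by field_simp
  have hsin0 : 0 < Real.sin (Real.pi / M) :=
    Real.sin_pos_of_pos_of_lt_pi (by positivity)
      (by rw [div_lt_iff₀ hM0]; nlinarith)
  rw [habs]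
  have : Real.sin (Real.pi / M) ≤ |Real.sin (d * Real.pi / M)| :=
    hband.trans (le_abs_self _)
  linarith

/-- Quadratic form lower bound via the smallest eigenvalue. -/
lemma aux_quad_lb {n : ℕ} [Nonempty (Fin n)] {A : Matrix (Fin n) (Fin n) ℂ}
    (hA : A.IsHermitian) (ξ : Fin n → ℂ) :
    (⨅ i, hA.eigenvalues i) * (star ξ ⬝ᵥ ξ).re ≤ (star ξ ⬝ᵥ A.mulVec ξ).re := by
  classical
  set U : Matrix (Fin n) (Fin n) ℂ :=
    (Matrix.IsHermitian.eigenvectorUnitary hA : Matrix (Fin n) (Fin n) ℂ) with hU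
  set D : Matrix (Fin n) (Fin n) ℂ :=
    Matrix.diagonal (RCLike.ofReal ∘ hA.eigenvalues) with hD
  set w : Fin n → ℂ := star U *ᵥ ξ with hw
  have hsw : star w = star ξ ᵥ* U := by
    rw [hw, Matrix.star_mulVec, Matrix.star_eq_conjTranspose,
      Matrix.conjTranspose_conjTranspose]
  have hUunit : U * star U = 1 :=
    Matrix.mem_unitaryGroup_iff.mp (Matrix.IsHermitian.eigenvectorUnitary hA).2
  have h1 : star ξ ⬝ᵥ A.mulVec ξ = star w ⬝ᵥ D *ᵥ w := by
    conv_lhs => rw [hA.spectral_theorem]; simp only [Unitary.conjStarAlgAut_apply, Unitary.coe_star]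
    rw [show ((U * D * star U) : Matrix (Fin n) (Fin n) ℂ) *ᵥ ξ = U *ᵥ (D *ᵥ w) by
      rw [hw, Matrix.mulVec_mulVec, Matrix.mulVec_mulVec, mul_assoc]]
    rw [Matrix.dotProduct_mulVec, ← hsw]
  have h2 : star ξ ⬝ᵥ ξ = star w ⬝ᵥ w := by
    rw [hsw, hw, ← Matrix.dotProduct_mulVec, Matrix.mulVec_mulVec, hUunit,
      Matrix.one_mulVec]
  rw [h1, h2]
  have hre1 : (star w ⬝ᵥ D *ᵥ w).re = ∑ i, hA.eigenvalues i * Complex.normSq (w i) := by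
    rw [dotProduct, Complex.re_sum]
    refine Finset.sum_congr rfl fun i _ => ?_
    simp only [hD, Matrix.mulVec_diagonal, Function.comp_apply, Pi.star_apply,
      RCLike.star_def]
    rw [show (RCLike.ofReal (hA.eigenvalues i) : ℂ) = ((hA.eigenvalues i : ℝ) : ℂ) from rfl]
    simp [Complex.mul_re, Complex.normSq_apply, Complex.conj_re, Complex.conj_im]
    ring
  have hre2 : (star w ⬝ᵥ w).re = ∑ i, Complex.normSq (w i) := by
    rw [dotProduct, Complex.re_sum]
    refine Finset.sum_congr rfl fun i _ => ?_
    simp [Complex.mul_re, Complex.normSq_apply, Complex.conj_re, Complex.conj_im]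
  rw [hre1, hre2, Finset.mul_sum]
  refine Finset.sum_le_sum fun i _ => ?_
  exact mul_le_mul_of_nonneg_right (ciInf_le (Finite.bddBelow_range _) i)
    (Complex.normSq_nonneg _)

/-- Under the condition `√2 λ_min(Q̄) sin(π/M) > ‖H†v‖_∞`, for any two distinct
M-PSK vectors `x*` and `x`, `−2⟨x*−x, Q̄(x*−x)⟩ + 2⟨−H†v, x*−x⟩ < 0`, where
`Q̄ = H†H − (1/2) Diag(diag(H†H))` and `⟨u, w⟩ = Re(u†w)`. -/
theorem stmt_18 {m n M : ℕ} (hM : 2 ≤ M)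
    (H : Matrix (Fin m) (Fin n) ℂ) (v : Fin m → ℂ)
    (Qb : Matrix (Fin n) (Fin n) ℂ)
    (hQb : Qb = Hᴴ * H - (1 / 2 : ℂ) • Matrix.diagonal (fun j => (Hᴴ * H) j j))
    (hQbHerm : Qb.IsHermitian)
    (θ θs : Fin n → ℝ)
    (hθ : ∀ j, ∃ k < M, θ j = 2 * k * Real.pi / M)
    (hθs : ∀ j, ∃ k < M, θs j = 2 * k * Real.pi / M)
    (x xs : Fin n → ℂ)
    (hx : ∀ j, x j = Complex.exp (θ j * Complex.I))
    (hxs : ∀ j, xs j = Complex.exp (θs j * Complex.I))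
    (hne : xs ≠ x)
    (hgap : (⨆ k, ‖Hᴴ.mulVec v k‖) <
      Real.sqrt 2 * (⨅ i, hQbHerm.eigenvalues i) * Real.sin (Real.pi / M)) :
    -2 * (star (xs - x) ⬝ᵥ Qb.mulVec (xs - x)).re +
      2 * (star (-(Hᴴ.mulVec v)) ⬝ᵥ (xs - x)).re < 0 := by
  classical
  have hπ := Real.pi_pos
  have hM0 : (0 : ℝ) < M := by exact_mod_cast Nat.lt_of_lt_of_le Nat.zero_lt_two hM
  have hM1 : (2 : ℝ) ≤ M := by exact_mod_cast hM
  have hsin0 : 0 < Real.sin (Real.pi / M) :=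
    Real.sin_pos_of_pos_of_lt_pi (by positivity) (by rw [div_lt_iff₀ hM0]; nlinarith)
  set ξ : Fin n → ℂ := xs - x with hξ
  set b : Fin n → ℂ := Hᴴ.mulVec v with hb
  set B : ℝ := ⨆ k, ‖b k‖ with hB
  set lam : ℝ := ⨅ i, hQbHerm.eigenvalues i with hlam
  have hnonempty : Nonempty (Fin n) := by
    rcases isEmpty_or_nonempty (Fin n) with h | h
    · exact absurd (funext fun j => h.elim j) hne
    · exact h
  -- entrywise lower bound
  have hentry : ∀ j, ξ j ≠ 0 → 2 * Real.sin (Real.pi / M) ≤ ‖ξ j‖ := by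
    intro j hj
    obtain ⟨ks, hks, hθsj⟩ := hθs j
    obtain ⟨k, hk, hθj⟩ := hθ j
    have hξj : ξ j = Complex.exp (θs j * Complex.I) - Complex.exp (θ j * Complex.I) := by
      simp [hξ, hxs j, hx j]
    have hnej : Complex.exp (θs j * Complex.I) ≠ Complex.exp (θ j * Complex.I) := by
      intro h; apply hj; rw [hξj, h, sub_self]
    rw [hξj]
    exact aux_entry hM hks hk hθsj hθj hnej
  set S1 : ℝ := ∑ j, ‖ξ j‖ with hS1
  have hS1nn : ∀ j, (0:ℝ) ≤ ‖ξ j‖ := fun j => norm_nonneg _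
  have hS1pos : 0 < S1 := by
    have : ∃ j, ξ j ≠ 0 := by
      by_contra h
      push_neg at h
      exact hne (by funext j; have := h j; rwa [hξ, Pi.sub_apply, sub_eq_zero] at this)
    obtain ⟨j0, hj0⟩ := this
    have h1 : 2 * Real.sin (Real.pi / M) ≤ ‖ξ j0‖ := hentry j0 hj0
    have h2 : ‖ξ j0‖ ≤ S1 :=
      Finset.single_le_sum (fun j _ => hS1nn j) (Finset.mem_univ j0)
    linarith
  -- ℓ² lower bound
  have hdot2 : (star ξ ⬝ᵥ ξ).re = ∑ j, Complex.normSq (ξ j) := by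
    rw [dotProduct, Complex.re_sum]
    refine Finset.sum_congr rfl fun j _ => ?_
    simp [Complex.mul_re, Complex.normSq_apply, Complex.conj_re, Complex.conj_im]
  have hS2 : 2 * Real.sin (Real.pi / M) * S1 ≤ (star ξ ⬝ᵥ ξ).re := by
    rw [hdot2, hS1, Finset.mul_sum]
    refine Finset.sum_le_sum fun j _ => ?_
    rcases eq_or_ne (ξ j) 0 with h | h
    · simp [h]
    · have h1 := hentry j h
      rw [← Complex.sq_norm]
      nlinarith [hS1nn j]
  -- linear term upper bound
  have hBub : ∀ j, ‖b j‖ ≤ B :=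
    fun j => le_ciSup (f := fun k => ‖b k‖) (Finite.bddAbove_range _) j
  have hBnn : 0 ≤ B :=
    (norm_nonneg _).trans (hBub (Classical.arbitrary (Fin n)))
  have hlin : (star (-b) ⬝ᵥ ξ).re ≤ B * S1 := by
    rw [dotProduct, Complex.re_sum, hS1, Finset.mul_sum]
    refine Finset.sum_le_sum fun j _ => ?_
    have h1 : (star (-b) j * ξ j).re ≤ ‖star (-b) j * ξ j‖ :=
      Complex.re_le_norm _
    have h2 : ‖star (-b) j * ξ j‖ = ‖b j‖ * ‖ξ j‖ := by
      simp [_root_.map_mul]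
    rw [h2] at h1
    exact h1.trans (mul_le_mul_of_nonneg_right (hBub j) (hS1nn j))
  -- quadratic term lower bound
  have hquad := aux_quad_lb hQbHerm ξ
  -- positivity of lam
  have hsqrt2 : 0 < Real.sqrt 2 := by positivity
  have hsqrt2le : Real.sqrt 2 ≤ 2 := by
    nlinarith [Real.sq_sqrt (by norm_num : (0:ℝ) ≤ 2), Real.sqrt_nonneg 2]
  have hgap' : B < Real.sqrt 2 * lam * Real.sin (Real.pi / M) := hgap
  have hlampos : 0 < lam := by
    by_contra hcon
    push_neg at hcon
    nlinarith [mul_nonpos_of_nonneg_of_nonpos (mul_nonneg hsqrt2.le hsin0.le) hcon]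
  -- combine
  have hQlb : lam * (2 * Real.sin (Real.pi / M) * S1) ≤ (star ξ ⬝ᵥ Qb.mulVec ξ).re := by
    refine le_trans ?_ hquad
    exact mul_le_mul_of_nonneg_left hS2 hlampos.le
  have hLub : (star (-b) ⬝ᵥ ξ).re < lam * (2 * Real.sin (Real.pi / M) * S1) := by
    have h1 : B * S1 < Real.sqrt 2 * lam * Real.sin (Real.pi / M) * S1 :=
      (mul_lt_mul_of_pos_right hgap' hS1pos)
    have h2 : Real.sqrt 2 * lam * Real.sin (Real.pi / M) * S1
        ≤ lam * (2 * Real.sin (Real.pi / M) * S1) := by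
      nlinarith [mul_nonneg (mul_nonneg (mul_nonneg (sub_nonneg.mpr hsqrt2le)
        hlampos.le) hsin0.le) hS1pos.le]
    linarith
  linarith
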